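/- arXiv:2202.10072 — 3 statements merged into one kernel-verified Lean document; each statement's English description precedes it below -/
import Mathlib

section
/- In the Attacker-Defender game with equal endowments R, the equilibrium probability that Attacker wins converges to 1/e as the endowment goes to infinity: lim_{R→∞} P(W) = lim_{R→∞} Σ_{(i,j): i>j} a*_i d*_j = 1/e. -/
/-- The `n`-th harmonic number `H_n = 1 + 1/2 + ... + 1/n` (with `H_0 = 0`). -/
noncomputable def H (n : ℕ) : ℝ := ∑ k ∈ Finset.Icc 1 n, (1 : ℝ) / k

/-- `l` is the upper bound `l*` for endowment `R`:
the unique `1 ≤ l ≤ R - 1` with `H_R - H_{R-l} < 1 < H_R - H_{R-l-1}`. -/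
def IsUpperBound (R l : ℕ) : Prop :=
  1 ≤ l ∧ l ≤ R - 1 ∧ H R - H (R - l) < 1 ∧ 1 < H R - H (R - l - 1)

/-- Attacker's equilibrium mixed strategy (defender endowment `R`, upper bound `l`). -/
noncomputable def astar (R l : ℕ) : ℕ → ℝ := fun i =>
  if i = 0 then ((R : ℝ) - l) / R
  else if i ≤ l then ((R : ℝ) - l) / (((R : ℝ) - i + 1) * ((R : ℝ) - i))
  else 0

/-- Defender's equilibrium mixed strategy (defender endowment `R`, upper bound `l`). -/
noncomputable def dstar (R l : ℕ) : ℕ → ℝ := fun j =>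
  if j < l then 1 / ((R : ℝ) - j)
  else if j = l then 1 - ∑ k ∈ Finset.range l, 1 / ((R : ℝ) - k)
  else 0

/-- The probability that Attacker wins (i.e. that `i > j`). -/
noncomputable def PW (RA RD : ℕ) (a d : ℕ → ℝ) : ℝ :=
  ∑ i ∈ Finset.range (RA + 1), ∑ j ∈ Finset.range (RD + 1), if j < i then a i * d j else 0


private lemma Hsucc (n : ℕ) : H (n + 1) = H n + 1 / ((n : ℝ) + 1) := by
  unfold H
  rw [Finset.sum_Icc_succ_top (by omega : 1 ≤ n + 1)]
  push_cast
  ring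

private lemma Hdiff {R l : ℕ} (h : l ≤ R) :
    H R - H (R - l) = ∑ j ∈ Finset.range l, 1 / ((R : ℝ) - j) := by
  induction l with
  | zero => simp
  | succ n ih =>
    have hn : n ≤ R := by omega
    have h1 : R - n = (R - (n + 1)) + 1 := by omega
    have h2 : H (R - n) = H (R - (n + 1)) + 1 / ((R : ℝ) - n) := by
      rw [h1, Hsucc]
      congr 2
      rw [Nat.cast_sub (by omega : n + 1 ≤ R)]
      push_cast
      ring
    rw [Finset.sum_range_succ, ← ih hn, h2]
    ring


private lemma ub_facts {R l : ℕ} (hR : 2 ≤ R) (hub : IsUpperBound R l) :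
    1 ≤ l ∧ l + 1 ≤ R ∧
    (∑ j ∈ Finset.range l, 1 / ((R:ℝ) - j)) < 1 ∧
    1 < (∑ j ∈ Finset.range l, 1 / ((R:ℝ) - j)) + 1 / ((R:ℝ) - l) := by
  obtain ⟨h1, h2', hlt, hgt⟩ := hub
  have h2 : l + 1 ≤ R := by omega
  refine ⟨h1, h2, ?_, ?_⟩
  · rw [← Hdiff (by omega : l ≤ R)]; exact hlt
  · have heq : R - l - 1 = R - (l + 1) := by omega
    rw [heq, Hdiff (by omega : l + 1 ≤ R), Finset.sum_range_succ] at hgt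
    exact hgt

private lemma Gform (R : ℕ) : ∀ n, n + 1 ≤ R →
    ∑ i ∈ Finset.range n, (1 / (((R:ℝ) - i) * ((R:ℝ) - i - 1))) *
        (∑ j ∈ Finset.range (i+1), 1 / ((R:ℝ) - j))
    = (∑ j ∈ Finset.range n, 1 / ((R:ℝ) - j)) / ((R:ℝ) - n)
      - ∑ j ∈ Finset.range n, 1 / ((R:ℝ) - j) ^ 2 := by
  intro n
  induction n with
  | zero => intro h; simp
  | succ m ih =>
    intro h
    have hc : ((m:ℝ)) + 2 ≤ (R:ℝ) := by exact_mod_cast (show m + 2 ≤ R by omega)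
    have hx : (R:ℝ) - m ≠ 0 := by intro hh; linarith [hh]
    have hx1 : (R:ℝ) - m - 1 ≠ 0 := by intro hh; linarith [hh]
    rw [Finset.sum_range_succ, ih (by omega),
      Finset.sum_range_succ (fun j => 1 / ((R:ℝ) - j)) m,
      Finset.sum_range_succ (fun j => 1 / ((R:ℝ) - j) ^ 2) m]
    push_cast
    have hx2 : (R:ℝ) - ((m:ℝ)+1) ≠ 0 := by intro hh; linarith [hh]
    field_simp
    ring

private lemma PW_eq {R l : ℕ} (h1 : 1 ≤ l) (h2 : l + 1 ≤ R) :
    PW R R (astar R l) (dstar R l)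
      = (∑ j ∈ Finset.range l, 1 / ((R:ℝ) - j))
        - ((R:ℝ) - l) * ∑ j ∈ Finset.range l, 1 / ((R:ℝ) - j) ^ 2 := by
  have step1 : PW R R (astar R l) (dstar R l)
      = ∑ i ∈ Finset.range (R+1), astar R l i * ∑ j ∈ Finset.range i, dstar R l j := by
    unfold PW
    refine Finset.sum_congr rfl fun i hi => ?_
    have hiR : i ≤ R + 1 := by
      have := Finset.mem_range.mp hi; omega
    rw [Finset.range_eq_Ico, ← Finset.sum_Ico_consecutive _ (Nat.zero_le i) hiR]
    have A : ∑ j ∈ Finset.Ico 0 i, (if j < i then astar R l i * dstar R l j else 0)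
        = ∑ j ∈ Finset.Ico 0 i, astar R l i * dstar R l j :=
      Finset.sum_congr rfl fun j hj => if_pos (Finset.mem_Ico.mp hj).2
    have B : ∑ j ∈ Finset.Ico i (R+1), (if j < i then astar R l i * dstar R l j else 0) = 0 :=
      Finset.sum_eq_zero fun j hj => if_neg (by have := (Finset.mem_Ico.mp hj).1; omega)
    rw [A, B, add_zero, ← Finset.range_eq_Ico, Finset.mul_sum]
  have step2 : ∑ i ∈ Finset.range (R+1), astar R l i * ∑ j ∈ Finset.range i, dstar R l j
      = ∑ i ∈ Finset.range (l+1), astar R l i * ∑ j ∈ Finset.range i, dstar R l j := by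
    refine (Finset.sum_subset (Finset.range_subset_range.mpr (by omega)) fun i _ hi => ?_).symm
    have hi' : l < i := by
      simp only [Finset.mem_range] at hi; omega
    have ha : astar R l i = 0 := by
      unfold astar
      rw [if_neg (by omega), if_neg (by omega)]
    rw [ha, zero_mul]
  have step3 : ∀ i ∈ Finset.range (l+1),
      astar R l i * (∑ j ∈ Finset.range i, dstar R l j)
      = astar R l i * ∑ j ∈ Finset.range i, 1 / ((R:ℝ) - j) := by
    intro i hi
    congr 1
    refine Finset.sum_congr rfl fun j hj => ?_
    have hjl : j < l := by
      have := Finset.mem_range.mp hi; have := Finset.mem_range.mp hj; omega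
    unfold dstar; rw [if_pos hjl]
  rw [step1, step2, Finset.sum_congr rfl step3, Finset.sum_range_succ']
  simp only [Finset.range_zero, Finset.sum_empty, mul_zero, add_zero]
  have step4 : ∀ i ∈ Finset.range l,
      astar R l (i+1) * ∑ j ∈ Finset.range (i+1), 1 / ((R:ℝ) - j)
      = ((R:ℝ) - l) * ((1 / (((R:ℝ) - i) * ((R:ℝ) - i - 1))) *
          ∑ j ∈ Finset.range (i+1), 1 / ((R:ℝ) - j)) := by
    intro i hi
    have hil : i + 1 ≤ l := by have := Finset.mem_range.mp hi; omega
    unfold astar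
    rw [if_neg (by omega), if_pos hil]
    push_cast
    ring
  rw [Finset.sum_congr rfl step4, ← Finset.mul_sum, Gform R l h2]
  have hRl : (R:ℝ) - l ≠ 0 := by
    have : (l:ℝ) + 1 ≤ R := by exact_mod_cast h2
    intro hh; linarith [hh]
  field_simp


private lemma Tlog_low {R l : ℕ} (h2 : l + 1 ≤ R) :
    Real.log ((R:ℝ) + 1) - Real.log ((R:ℝ) - l + 1)
      ≤ ∑ j ∈ Finset.range l, 1 / ((R:ℝ) - j) := by
  have tel := Finset.sum_range_sub' (fun j : ℕ => Real.log ((R:ℝ) + 1 - j)) l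
  have key : ∀ j ∈ Finset.range l,
      Real.log ((R:ℝ) + 1 - j) - Real.log ((R:ℝ) + 1 - (j+1:ℕ)) ≤ 1 / ((R:ℝ) - j) := by
    intro j hj
    have hjl : (j:ℝ) + 1 ≤ (R:ℝ) := by
      exact_mod_cast (show j + 1 ≤ R by have := Finset.mem_range.mp hj; omega)
    have hb : (0:ℝ) < (R:ℝ) - j := by linarith
    have := Real.log_le_sub_one_of_pos
      (show (0:ℝ) < ((R:ℝ)+1-j)/((R:ℝ)-j) from div_pos (by linarith) hb)
    rw [Real.log_div (by linarith) (by linarith)] at this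
    have heq : ((R:ℝ)+1-j)/((R:ℝ)-j) - 1 = 1/((R:ℝ)-j) := by field_simp; ring
    push_cast
    have harg : (R:ℝ) + 1 - ((j:ℝ)+1) = (R:ℝ) - j := by ring
    rw [harg]
    linarith
  calc Real.log ((R:ℝ) + 1) - Real.log ((R:ℝ) - l + 1)
      = ∑ j ∈ Finset.range l,
          (Real.log ((R:ℝ) + 1 - j) - Real.log ((R:ℝ) + 1 - (j+1:ℕ))) := by
        rw [tel]; push_cast; ring_nf
    _ ≤ _ := Finset.sum_le_sum key

private lemma Tlog_up {R l : ℕ} (h2 : l + 1 ≤ R) :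
    ∑ j ∈ Finset.range l, 1 / ((R:ℝ) - j)
      ≤ Real.log (R:ℝ) - Real.log ((R:ℝ) - l) := by
  have tel := Finset.sum_range_sub' (fun j : ℕ => Real.log ((R:ℝ) - j)) l
  have key : ∀ j ∈ Finset.range l,
      1 / ((R:ℝ) - j) ≤ Real.log ((R:ℝ) - j) - Real.log ((R:ℝ) - (j+1:ℕ)) := by
    intro j hj
    have hjl : (j:ℝ) + 2 ≤ (R:ℝ) := by
      exact_mod_cast (show j + 2 ≤ R by have := Finset.mem_range.mp hj; omega)
    have hb : (0:ℝ) < (R:ℝ) - j - 1 := by linarith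
    have := Real.log_le_sub_one_of_pos
      (show (0:ℝ) < ((R:ℝ)-j-1)/((R:ℝ)-j) from div_pos hb (by linarith))
    rw [Real.log_div (by linarith) (by linarith)] at this
    have hx : ((R:ℝ) - j) ≠ 0 := ne_of_gt (by linarith)
    have heq : ((R:ℝ)-j-1)/((R:ℝ)-j) = 1 - 1/((R:ℝ)-j) := by
      rw [sub_div, div_self hx]
    push_cast
    have harg : (R:ℝ) - ((j:ℝ)+1) = (R:ℝ) - j - 1 := by ring
    rw [harg]
    rw [heq] at this
    linarith
  calc ∑ j ∈ Finset.range l, 1 / ((R:ℝ) - j)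
      ≤ ∑ j ∈ Finset.range l, (Real.log ((R:ℝ) - j) - Real.log ((R:ℝ) - (j+1:ℕ))) :=
        Finset.sum_le_sum key
    _ = Real.log (R:ℝ) - Real.log ((R:ℝ) - l) := by rw [tel]; push_cast; ring_nf

private lemma U_up {R l : ℕ} (h2 : l + 1 ≤ R) :
    ∑ j ∈ Finset.range l, 1 / ((R:ℝ) - j) ^ 2
      ≤ 1 / ((R:ℝ) - l) - 1 / (R:ℝ) := by
  have tel := Finset.sum_range_sub (fun j : ℕ => 1 / ((R:ℝ) - j)) l
  have key : ∀ j ∈ Finset.range l,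
      1 / ((R:ℝ) - j) ^ 2 ≤ 1 / ((R:ℝ) - (j+1:ℕ)) - 1 / ((R:ℝ) - j) := by
    intro j hj
    have hjl : (j:ℝ) + 2 ≤ (R:ℝ) := by
      exact_mod_cast (show j + 2 ≤ R by have := Finset.mem_range.mp hj; omega)
    have hb : (0:ℝ) < (R:ℝ) - j - 1 := by linarith
    have hb2 : (0:ℝ) < (R:ℝ) - j := by linarith
    push_cast
    have harg : (R:ℝ) - ((j:ℝ)+1) = (R:ℝ) - j - 1 := by ring
    rw [harg]
    have heq : 1 / ((R:ℝ)-j-1) - 1/((R:ℝ)-j) = 1/(((R:ℝ)-j-1)*((R:ℝ)-j)) := by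
      rw [div_sub_div _ _ (ne_of_gt hb) (ne_of_gt hb2)]
      norm_num
    rw [heq]
    apply one_div_le_one_div_of_le (by positivity)
    nlinarith
  calc ∑ j ∈ Finset.range l, 1 / ((R:ℝ) - j) ^ 2
      ≤ ∑ j ∈ Finset.range l, (1 / ((R:ℝ) - (j+1:ℕ)) - 1 / ((R:ℝ) - j)) :=
        Finset.sum_le_sum key
    _ = 1 / ((R:ℝ) - l) - 1 / (R:ℝ) := by rw [tel]; push_cast; ring_nf

private lemma U_low {R l : ℕ} (h2 : l + 1 ≤ R) :
    1 / ((R:ℝ) - l + 1) - 1 / ((R:ℝ) + 1)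
      ≤ ∑ j ∈ Finset.range l, 1 / ((R:ℝ) - j) ^ 2 := by
  have tel := Finset.sum_range_sub (fun j : ℕ => 1 / ((R:ℝ) + 1 - j)) l
  have key : ∀ j ∈ Finset.range l,
      1 / ((R:ℝ) + 1 - (j+1:ℕ)) - 1 / ((R:ℝ) + 1 - j) ≤ 1 / ((R:ℝ) - j) ^ 2 := by
    intro j hj
    have hjl : (j:ℝ) + 1 ≤ (R:ℝ) := by
      exact_mod_cast (show j + 1 ≤ R by have := Finset.mem_range.mp hj; omega)
    have hb : (0:ℝ) < (R:ℝ) - j := by linarith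
    push_cast
    have harg : (R:ℝ) + 1 - ((j:ℝ)+1) = (R:ℝ) - j := by ring
    rw [harg]
    have heq : 1 / ((R:ℝ)-j) - 1/((R:ℝ)+1-j) = 1/(((R:ℝ)-j)*((R:ℝ)+1-j)) := by
      rw [div_sub_div _ _ (ne_of_gt hb) (ne_of_gt (by linarith : (0:ℝ) < (R:ℝ)+1-j))]
      norm_num
    rw [heq]
    apply one_div_le_one_div_of_le (by positivity)
    nlinarith
  calc 1 / ((R:ℝ) - l + 1) - 1 / ((R:ℝ) + 1)
      = ∑ j ∈ Finset.range l, (1 / ((R:ℝ) + 1 - (j+1:ℕ)) - 1 / ((R:ℝ) + 1 - j)) := by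
        rw [tel]; push_cast; ring_nf
    _ ≤ _ := Finset.sum_le_sum key

set_option maxHeartbeats 1000000 in
/-- The equilibrium probability that Attacker wins converges to `1/e`. -/
theorem attacker_win_probability_tendsto (L : ℕ → ℕ)
    (hL : ∀ R, 2 ≤ R → IsUpperBound R (L R)) :
    Filter.Tendsto (fun R : ℕ => PW R R (astar R (L R)) (dstar R (L R))) Filter.atTop
      (nhds (1 / Real.exp 1)) := by
  have hEpos : (0:ℝ) < Real.exp 1 := Real.exp_pos 1
  set m : ℕ → ℝ := fun R => (R:ℝ) - (L R : ℝ) with hm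
  -- eventual facts bundle
  have EV : ∀ᶠ R : ℕ in Filter.atTop,
      (1 ≤ m R) ∧ (((R:ℝ)+1)/Real.exp 1 - 1 ≤ m R) ∧
      (m R / R ≤ Real.exp (1/m R) / Real.exp 1) ∧
      (m R / R - 1/(m R) ≤ PW R R (astar R (L R)) (dstar R (L R))) ∧
      (PW R R (astar R (L R)) (dstar R (L R)) ≤ 1 - m R/(m R + 1) + m R / R) := by
    filter_upwards [Filter.eventually_ge_atTop 2] with R hR
    obtain ⟨h1, h2, hT1, hT2⟩ := ub_facts hR (hL R hR)
    set l := L R with hl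
    set T := ∑ j ∈ Finset.range l, 1 / ((R:ℝ) - j) with hTdef
    set U := ∑ j ∈ Finset.range l, 1 / ((R:ℝ) - j) ^ 2 with hUdef
    have hcast : (l:ℝ) + 1 ≤ (R:ℝ) := by exact_mod_cast h2
    have hmval : m R = (R:ℝ) - (l:ℝ) := rfl
    have hm1 : (1:ℝ) ≤ m R := by rw [hmval]; linarith
    have hmpos : (0:ℝ) < m R := by linarith
    have hRpos : (0:ℝ) < (R:ℝ) := by linarith
    have hmne : m R ≠ 0 := ne_of_gt hmpos
    have hRne : (R:ℝ) ≠ 0 := ne_of_gt hRpos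
    refine ⟨hm1, ?_, ?_, ?_, ?_⟩
    · -- ((R+1)/e - 1 ≤ m R
      have B1 := Tlog_low h2
      rw [← hTdef] at B1
      have hlt1 : Real.log ((R:ℝ)+1) - Real.log (m R + 1) < 1 := by
        rw [hmval]; exact lt_of_le_of_lt (by linarith [B1] : Real.log ((R:ℝ)+1) - Real.log ((R:ℝ) - (l:ℝ) + 1) ≤ T) hT1
      have hq : Real.log (((R:ℝ)+1)/(m R + 1)) < 1 := by
        rw [Real.log_div (by linarith) (by linarith)]; exact hlt1
      have hq2 : ((R:ℝ)+1)/(m R + 1) < Real.exp 1 :=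
        (Real.log_lt_iff_lt_exp (by positivity)).mp hq
      have hq3 : (R:ℝ)+1 < Real.exp 1 * (m R + 1) := by
        rwa [div_lt_iff₀ (by linarith : (0:ℝ) < m R + 1)] at hq2
        -- gives (R+1) < exp 1 * (m+1)? (div_lt_iff h).mp : a/b < c ↔ a < c * b
      have : ((R:ℝ)+1)/Real.exp 1 < m R + 1 := by
        rw [div_lt_iff₀ hEpos]
        nlinarith
      linarith
    · -- m/R ≤ exp(1/m)/e
      have B2 := Tlog_up h2
      rw [← hTdef] at B2
      have hlg : 1 - 1/(m R) < Real.log ((R:ℝ)/(m R)) := by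
        rw [Real.log_div hRne hmne, hmval]
        linarith [B2, hT2]
      have hexp : Real.exp (1 - 1/(m R)) < (R:ℝ)/(m R) :=
        (Real.lt_log_iff_exp_lt (by positivity)).mp hlg
      have hme : m R * Real.exp (1 - 1/(m R)) < (R:ℝ) := by
        rw [lt_div_iff₀ hmpos] at hexp
        nlinarith
      have hsplit : Real.exp 1 = Real.exp (1 - 1/(m R)) * Real.exp (1/(m R)) := by
        rw [← Real.exp_add]; ring_nf
      refine le_of_lt ?_
      rw [div_lt_div_iff₀ hRpos hEpos]
      calc m R * Real.exp 1
          = (m R * Real.exp (1 - 1/(m R))) * Real.exp (1/(m R)) := by rw [hsplit]; ring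
        _ < (R:ℝ) * Real.exp (1/(m R)) :=
            mul_lt_mul_of_pos_right hme (Real.exp_pos _)
        _ = Real.exp (1/(m R)) * (R:ℝ) := by ring
    · -- lower bound for PW
      have hPW := PW_eq h1 h2
      rw [← hTdef, ← hUdef, ← hmval] at hPW
      have hUu := U_up h2
      rw [← hUdef, ← hmval] at hUu
      have e1 : m R * U ≤ m R * (1/(m R) - 1/(R:ℝ)) :=
        mul_le_mul_of_nonneg_left hUu (le_of_lt hmpos)
      have e2 : m R * (1/(m R) - 1/(R:ℝ)) = 1 - m R/(R:ℝ) := by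
        rw [mul_sub, mul_one_div_cancel hmne, mul_one_div]
      have hT2' : 1 - 1/(m R) < T := by
        rw [← hmval] at hT2; linarith
      rw [hPW]
      linarith
    · -- upper bound for PW
      have hPW := PW_eq h1 h2
      rw [← hTdef, ← hUdef, ← hmval] at hPW
      have hUl := U_low h2
      rw [← hUdef, ← hmval] at hUl
      have e1 : m R * (1/(m R + 1) - 1/((R:ℝ)+1)) ≤ m R * U :=
        mul_le_mul_of_nonneg_left hUl (le_of_lt hmpos)
      have e3 : m R * (1/(m R + 1) - 1/((R:ℝ)+1)) = m R/(m R + 1) - m R/((R:ℝ)+1) := by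
        ring
      have e4 : m R/((R:ℝ)+1) ≤ m R/(R:ℝ) :=
        div_le_div_of_nonneg_left (le_of_lt hmpos) hRpos (by linarith)
      rw [hPW]
      linarith
  -- limits
  have hA : Filter.Tendsto m Filter.atTop Filter.atTop := by
    have hg : Filter.Tendsto (fun R : ℕ => ((R:ℝ)+1)/Real.exp 1 - 1)
        Filter.atTop Filter.atTop := by
      have h1 : Filter.Tendsto (fun R : ℕ => ((R:ℝ)+1)) Filter.atTop Filter.atTop :=
        Filter.tendsto_atTop_add_const_right _ 1 tendsto_natCast_atTop_atTop
      simpa [sub_eq_add_neg] using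
        Filter.tendsto_atTop_add_const_right _ (-1) (h1.atTop_div_const hEpos)
    have EV1 : ∀ᶠ R : ℕ in Filter.atTop, ((R:ℝ)+1)/Real.exp 1 - 1 ≤ m R :=
      EV.mono fun R h => h.2.1
    exact Filter.tendsto_atTop_mono' Filter.atTop EV1 hg
  have hminv : Filter.Tendsto (fun R => 1/(m R)) Filter.atTop (nhds 0) := by
    simpa [one_div, Pi.inv_def] using hA.inv_tendsto_atTop
  have h1R : Filter.Tendsto (fun R : ℕ => 1/(R:ℝ)) Filter.atTop (nhds 0) :=
    tendsto_one_div_atTop_nhds_zero_nat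
  -- B : m R / R → 1/e
  have hB : Filter.Tendsto (fun R : ℕ => m R / R) Filter.atTop (nhds (1/Real.exp 1)) := by
    have hgl : Filter.Tendsto (fun R : ℕ => (((R:ℝ)+1)/Real.exp 1 - 1)/(R:ℝ))
        Filter.atTop (nhds (1/Real.exp 1)) := by
      have cand : Filter.Tendsto (fun R : ℕ => (1 + 1/(R:ℝ))/Real.exp 1 - 1/(R:ℝ))
          Filter.atTop (nhds ((1 + 0)/Real.exp 1 - 0)) :=
        ((tendsto_const_nhds.add h1R).div_const _).sub h1R
      rw [show ((1:ℝ) + 0)/Real.exp 1 - 0 = 1/Real.exp 1 by norm_num] at cand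
      apply cand.congr'
      filter_upwards [Filter.eventually_ge_atTop 1] with R hR
      have hRpos : (0:ℝ) < (R:ℝ) := by exact_mod_cast (by omega : 0 < R)
      field_simp
    have hgu : Filter.Tendsto (fun R : ℕ => Real.exp (1/(m R))/Real.exp 1)
        Filter.atTop (nhds (1/Real.exp 1)) := by
      have : Filter.Tendsto (fun R : ℕ => Real.exp (1/(m R)))
          Filter.atTop (nhds (Real.exp 0)) :=
        (Real.continuous_exp.tendsto 0).comp hminv
      rw [Real.exp_zero] at this
      exact this.div_const _
    refine tendsto_of_tendsto_of_tendsto_of_le_of_le' hgl hgu ?_ ?_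
    · filter_upwards [EV, Filter.eventually_ge_atTop 1] with R h hR1
      have hRpos : (0:ℝ) < (R:ℝ) := by exact_mod_cast (by omega : 0 < R)
      exact (div_le_div_iff_of_pos_right hRpos).mpr h.2.1
    · exact EV.mono fun R h => h.2.2.1
  -- low and up limits
  have hlow : Filter.Tendsto (fun R : ℕ => m R / R - 1/(m R)) Filter.atTop
      (nhds (1/Real.exp 1)) := by
    have := hB.sub hminv
    simpa using this
  have hup : Filter.Tendsto (fun R : ℕ => 1 - m R/(m R + 1) + m R / R) Filter.atTop
      (nhds (1/Real.exp 1)) := by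
    have hm1inv : Filter.Tendsto (fun R => 1/(m R + 1)) Filter.atTop (nhds 0) := by
      have : Filter.Tendsto (fun R => m R + 1) Filter.atTop Filter.atTop :=
        Filter.tendsto_atTop_add_const_right _ 1 hA
      simpa [one_div, Pi.inv_def] using this.inv_tendsto_atTop
    have hfrac : Filter.Tendsto (fun R => m R/(m R + 1)) Filter.atTop (nhds 1) := by
      have cand : Filter.Tendsto (fun R => 1 - 1/(m R + 1)) Filter.atTop (nhds (1 - 0)) :=
        tendsto_const_nhds.sub hm1inv
      rw [sub_zero] at cand
      apply cand.congr'
      filter_upwards [EV] with R h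
      have : (0:ℝ) < m R + 1 := by linarith [h.1]
      field_simp
      ring
    have hconst : Filter.Tendsto (fun _ : ℕ => (1:ℝ)) Filter.atTop (nhds 1) :=
      tendsto_const_nhds
    have := (hconst.sub hfrac).add hB
    rw [show (1:ℝ) - 1 + 1/Real.exp 1 = 1/Real.exp 1 by ring] at this
    exact this
  exact tendsto_of_tendsto_of_tendsto_of_le_of_le' hlow hup
    (EV.mono fun R h => h.2.2.2.1) (EV.mono fun R h => h.2.2.2.2)
end

section
/- At the equilibrium strategy pair (a*, d*) of the Attacker-Defender game with endowments R_A and R_D, the sum of expected payoffs equals the total endowments less the upper bound and the sum of expected conflict investments equals the upper bound: Π_A(a*,d*) + Π_D(a*,d*) = R_A + R_D − l* and E(a*) + E(d*) = l*. -/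
/-- Attacker's payoff: `R_A - i + R_D - j` if `i > j`, else `R_A - i`. -/
noncomputable def piA (RA RD i j : ℕ) : ℝ :=
  if j < i then (RA : ℝ) - i + ((RD : ℝ) - j) else (RA : ℝ) - i

/-- Defender's payoff: `0` if `i > j`, else `R_D - j`. -/
noncomputable def piD (RD i j : ℕ) : ℝ :=
  if j < i then 0 else (RD : ℝ) - j

/-- A mixed strategy over the investments `{0, 1, ..., R}`. -/
def IsMixed (R : ℕ) (s : ℕ → ℝ) : Prop :=
  (∀ i, 0 ≤ s i) ∧ (∀ i, R < i → s i = 0) ∧ ∑ i ∈ Finset.range (R + 1), s i = 1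

/-- Attacker's expected payoff under mixed strategies. -/
noncomputable def PayA (RA RD : ℕ) (a d : ℕ → ℝ) : ℝ :=
  ∑ i ∈ Finset.range (RA + 1), ∑ j ∈ Finset.range (RD + 1), a i * d j * piA RA RD i j

/-- Defender's expected payoff under mixed strategies. -/
noncomputable def PayD (RA RD : ℕ) (a d : ℕ → ℝ) : ℝ :=
  ∑ i ∈ Finset.range (RA + 1), ∑ j ∈ Finset.range (RD + 1), a i * d j * piD RD i j

/-- Mixed-strategy Nash equilibrium of the A-D game with endowments `RA`, `RD`. -/
def IsNash (RA RD : ℕ) (a d : ℕ → ℝ) : Prop :=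
  IsMixed RA a ∧ IsMixed RD d ∧
  (∀ a', IsMixed RA a' → PayA RA RD a' d ≤ PayA RA RD a d) ∧
  (∀ d', IsMixed RD d' → PayD RA RD a d' ≤ PayD RA RD a d)

/-- Expected conflict investment of a mixed strategy on `{0, ..., R}`. -/
noncomputable def Einv (R : ℕ) (s : ℕ → ℝ) : ℝ := ∑ i ∈ Finset.range (R + 1), (i : ℝ) * s i

/-!
Every outcome `(i, j)` splits the total endowment `R_A + R_D` into the two payoffs and the two
investments, so for any pair of mixed strategies `Π_A + Π_D = R_A + R_D - (E(a) + E(d))`; it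
remains to compute the expected investments. With `S = ∑_{j<l} 1/(R_D - j)`, the defender's is
`(R_D - l) S`, and since `a*_i / (R_D - l)` is the difference sequence of `i ↦ 1/(R_D - i)`
(read as `0` at `i = -1`), summation by parts gives `E(a*) = l - (R_D - l) S`.
-/

open Finset

theorem piA_add_piD (RA RD i j : ℕ) :
    piA RA RD i j + piD RD i j = (RA : ℝ) + RD - i - j := by
  unfold piA piD
  split_ifs <;> ring

theorem payA_add_payD {RA RD : ℕ} {a d : ℕ → ℝ}
    (ha : ∑ i ∈ range (RA + 1), a i = 1) (hd : ∑ j ∈ range (RD + 1), d j = 1) :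
    PayA RA RD a d + PayD RA RD a d = (RA : ℝ) + RD - (Einv RA a + Einv RD d) := by
  have hsplit : ∀ i j, a i * d j * piA RA RD i j + a i * d j * piD RD i j
      = (RA + RD : ℝ) * a i * d j - i * a i * d j - a i * (j * d j) := by
    intro i j
    rw [← mul_add, piA_add_piD]
    ring
  simp only [PayA, PayD, Einv, ← sum_add_distrib, hsplit, sum_sub_distrib, ← mul_sum, ← sum_mul,
    hd, ha]
  ring

theorem sum_range_mul_eq_of_eq_zero {M : Type*} [NonUnitalNonAssocSemiring M] {s : ℕ → M}
    {l n : ℕ} (hs : ∀ i, l < i → s i = 0) (hln : l ≤ n) (f : ℕ → M) :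
    ∑ i ∈ range (n + 1), f i * s i = ∑ i ∈ range (l + 1), f i * s i := by
  refine (sum_subset (range_subset_range.2 (by omega)) fun i _ hi => ?_).symm
  rw [hs i (by simpa using hi), mul_zero]

section EquilibriumStrategies

variable {R l : ℕ}

theorem astar_eq_zero_of_lt {i : ℕ} (hi : l < i) : astar R l i = 0 := by
  simp [astar, show i ≠ 0 by omega, show ¬i ≤ l by omega]

theorem dstar_eq_zero_of_lt {j : ℕ} (hj : l < j) : dstar R l j = 0 := by
  simp [dstar, show ¬j < l by omega, show j ≠ l by omega]

theorem sum_range_astar (hl : l < R) :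
    ∀ n ≤ l, ∑ i ∈ range (n + 1), astar R l i = ((R : ℝ) - l) / (R - n) := by
  intro n hn
  induction n with
  | zero => simp [astar]
  | succ n ih =>
    have hn' : (n : ℝ) + 1 < R := by exact_mod_cast (by omega : n + 1 < R)
    have h₁ : (R : ℝ) - n ≠ 0 := by linarith
    have h₂ : (R : ℝ) - (n + 1) ≠ 0 := by linarith
    rw [sum_range_succ, ih (by omega), astar, if_neg n.succ_ne_zero, if_pos hn]
    push_cast
    rw [show (R : ℝ) - (n + 1) + 1 = R - n by ring]
    field_simp
    ring

theorem sum_range_mul_astar (hl : l < R) :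
    ∀ n ≤ l, ∑ i ∈ range (n + 1), (i : ℝ) * astar R l i
      = ((R : ℝ) - l) * (n / (R - n) - ∑ j ∈ range n, 1 / ((R : ℝ) - j)) := by
  intro n hn
  induction n with
  | zero => simp
  | succ n ih =>
    have hn' : (n : ℝ) + 1 < R := by exact_mod_cast (by omega : n + 1 < R)
    have h₁ : (R : ℝ) - n ≠ 0 := by linarith
    have h₂ : (R : ℝ) - (n + 1) ≠ 0 := by linarith
    rw [sum_range_succ, ih (by omega), astar, if_neg n.succ_ne_zero, if_pos hn, sum_range_succ]
    push_cast
    rw [show (R : ℝ) - (n + 1) + 1 = R - n by ring]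
    field_simp
    ring

theorem sum_astar {n : ℕ} (hl : l < R) (hln : l ≤ n) :
    ∑ i ∈ range (n + 1), astar R l i = 1 := by
  have hR : (R : ℝ) - l ≠ 0 := sub_ne_zero.2 (by exact_mod_cast hl.ne')
  simpa [div_self hR, sum_range_astar hl l le_rfl] using
    sum_range_mul_eq_of_eq_zero (fun _ => astar_eq_zero_of_lt (R := R)) hln (fun _ => 1)

theorem einv_astar {n : ℕ} (hl : l < R) (hln : l ≤ n) :
    Einv n (astar R l) = l - ((R : ℝ) - l) * ∑ j ∈ range l, 1 / ((R : ℝ) - j) := by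
  have hR : (R : ℝ) - l ≠ 0 := sub_ne_zero.2 (by exact_mod_cast hl.ne')
  rw [Einv, sum_range_mul_eq_of_eq_zero (fun _ => astar_eq_zero_of_lt (R := R)) hln,
    sum_range_mul_astar hl l le_rfl, mul_sub, mul_div_cancel₀ _ hR]

theorem sum_dstar (hl : l < R) : ∑ j ∈ range (R + 1), dstar R l j = 1 := by
  have hsum := sum_range_mul_eq_of_eq_zero (fun _ => dstar_eq_zero_of_lt (R := R)) hl.le (fun _ => 1)
  simp only [one_mul] at hsum
  have hlt : ∀ j ∈ range l, dstar R l j = 1 / ((R : ℝ) - j) := fun j hj => if_pos (mem_range.1 hj)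
  rw [hsum, sum_range_succ, sum_congr rfl hlt]
  simp [dstar]

theorem einv_dstar (hl : l < R) :
    Einv R (dstar R l) = ((R : ℝ) - l) * ∑ j ∈ range l, 1 / ((R : ℝ) - j) := by
  have hj : ∀ j ∈ range l, (j : ℝ) * dstar R l j = R * (1 / ((R : ℝ) - j)) - 1 := by
    intro j hj
    have hjR : (j : ℝ) < R := by exact_mod_cast (mem_range.1 hj).trans hl
    rw [dstar, if_pos (mem_range.1 hj)]
    field_simp [(sub_pos.2 hjR).ne']
    ring
  rw [Einv, sum_range_mul_eq_of_eq_zero (fun _ => dstar_eq_zero_of_lt (R := R)) hl.le, sum_range_succ,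
    sum_congr rfl hj, sum_sub_distrib, ← mul_sum]
  simp only [sum_const, card_range, nsmul_eq_mul, mul_one, dstar, lt_self_iff_false, ↓reduceIte]
  ring

end EquilibriumStrategies

theorem unequal_endowments_totals_general (RA RD k : ℕ)
    (hk : IsUpperBound RD k) :
    PayA RA RD (astar RD (min RA k)) (dstar RD (min RA k)) +
        PayD RA RD (astar RD (min RA k)) (dstar RD (min RA k))
      = (RA : ℝ) + RD - (min RA k : ℕ) ∧
    Einv RA (astar RD (min RA k)) + Einv RD (dstar RD (min RA k)) = ((min RA k : ℕ) : ℝ) := by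
  obtain ⟨hk₁, hkR, -, -⟩ := hk
  have hl : min RA k < RD := by omega
  have hE : Einv RA (astar RD (min RA k)) + Einv RD (dstar RD (min RA k)) = (min RA k : ℕ) := by
    rw [einv_astar hl (min_le_left RA k), einv_dstar hl]
    ring
  refine ⟨?_, hE⟩
  rw [payA_add_payD (sum_astar hl (min_le_left RA k)) (sum_dstar hl), hE]

/-- At the equilibrium of the A-D game with endowments `R_A, R_D`, the sum of expected
payoffs is `R_A + R_D - l*` and the sum of expected conflict investments is `l*`,
where `l* = min (R_A, k*)`. -/
theorem unequal_endowments_totals (RA RD k : ℕ) (hA : 2 ≤ RA) (hD : 2 ≤ RD)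
    (hk : IsUpperBound RD k) :
    PayA RA RD (astar RD (min RA k)) (dstar RD (min RA k)) +
        PayD RA RD (astar RD (min RA k)) (dstar RD (min RA k))
      = (RA : ℝ) + RD - (min RA k : ℕ) ∧
    Einv RA (astar RD (min RA k)) + Einv RD (dstar RD (min RA k)) = ((min RA k : ℕ) : ℝ) :=
  unequal_endowments_totals_general RA RD k hk
end

section
/- Fix an integer R_A ≥ 2 and consider the equilibrium (a*, d*) of the Attacker-Defender game with endowments R_A and R_D as a function of R_D. As R_D → ∞: (i) Defender's equilibrium probability of defending at R_A converges to 1, lim_{R_D→∞} d*_{R_A} = 1; (ii) Attacker's equilibrium probability of refraining from attack converges to 1, lim_{R_D→∞} a*_0 = 1; and (iii) the equilibrium probability that Attacker wins converges to 0, lim_{R_D→∞} P(W) = lim_{R_D→∞} Σ_{(i,j): i>j} a*_i d*_j = 0. -/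
open Filter Finset

lemma H_eq (n : ℕ) : H n = ∑ k ∈ Finset.Ioc 0 n, (1:ℝ)/k := by
  rw [H, ← Finset.Icc_add_one_left_eq_Ioc, zero_add]

lemma H_sub (m R : ℕ) (h : m ≤ R) : H R - H m = ∑ k ∈ Finset.Ioc m R, (1:ℝ)/k := by
  rw [H_eq, H_eq, sub_eq_iff_eq_add']
  exact (Finset.sum_Ioc_consecutive _ (Nat.zero_le m) h).symm

lemma H_sub_le (m R : ℕ) (h : m ≤ R) : H R - H m ≤ (R - m : ℕ) * (1 / ((m:ℝ) + 1)) := by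
  rw [H_sub m R h]
  have := Finset.sum_le_card_nsmul (Finset.Ioc m R) (fun k => (1:ℝ)/k) (1/((m:ℝ)+1)) ?_
  · simpa [Nat.card_Ioc] using this
  · intro x hx
    simp only [Finset.mem_Ioc] at hx
    apply one_div_le_one_div_of_le (by positivity)
    exact_mod_cast hx.1

lemma K_ge (RD k : ℕ) (h1 : 1 ≤ k) (h2 : k ≤ RD - 1) (h3 : 1 < H RD - H (RD - k - 1)) :
    RD ≤ 2 * k := by
  have hm : RD - k - 1 ≤ RD := by omega
  have hb := h3.trans_le (H_sub_le _ _ hm)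
  have e1 : RD - (RD - k - 1) = k + 1 := by omega
  rw [e1] at hb
  have e2 : ((RD - k - 1 : ℕ) : ℝ) + 1 = (RD - k : ℕ) := by
    have : (RD - k - 1) + 1 = RD - k := by omega
    exact_mod_cast congrArg (Nat.cast : ℕ → ℝ) this
  rw [e2] at hb
  have hpos : (0:ℝ) < (RD - k : ℕ) := by
    have : 1 ≤ RD - k := by omega
    exact_mod_cast this
  rw [mul_one_div, lt_div_iff₀ hpos, one_mul] at hb
  have : RD - k < k + 1 := by exact_mod_cast hb
  omega

lemma tendsto_inv_sub (c : ℝ) : Tendsto (fun n : ℕ => 1/((n:ℝ) - c)) atTop (nhds 0) := by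
  have h : Tendsto (fun n : ℕ => (n:ℝ) - c) atTop atTop := by
    simpa [sub_eq_add_neg] using tendsto_atTop_add_const_right atTop (-c) tendsto_natCast_atTop_atTop
  simpa [one_div, Pi.inv_def] using h.inv_tendsto_atTop

lemma term_tendsto (RA i j : ℕ) (hi : i ≤ RA) (hj : j < i) :
    Tendsto (fun RD : ℕ => astar RD RA i * dstar RD RA j) atTop (nhds 0) := by
  have hij : (i:ℝ) ≤ RA := by exact_mod_cast hi
  have hji : (j:ℝ) + 1 ≤ i := by exact_mod_cast hj
  have hjA : j < RA := lt_of_lt_of_le hj hi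
  apply tendsto_of_tendsto_of_tendsto_of_le_of_le' tendsto_const_nhds (tendsto_inv_sub i)
  · filter_upwards [eventually_ge_atTop (RA + i + j + 1)] with RD hRD
    have hx : (RA:ℝ) + i + j + 1 ≤ RD := by exact_mod_cast hRD
    have h1 : (0:ℝ) < (RD:ℝ) - i := by linarith
    have h2 : (0:ℝ) < (RD:ℝ) - i + 1 := by linarith
    have h3 : (0:ℝ) < (RD:ℝ) - j := by linarith
    have h4 : (0:ℝ) ≤ (RD:ℝ) - RA := by linarith
    have hi0 : i ≠ 0 := by omega
    simp only [astar, dstar, if_pos hjA, if_neg hi0, if_pos hi]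
    positivity
  · filter_upwards [eventually_ge_atTop (RA + i + j + 1)] with RD hRD
    have hx : (RA:ℝ) + i + j + 1 ≤ RD := by exact_mod_cast hRD
    have h1 : (0:ℝ) < (RD:ℝ) - i := by linarith
    have h2 : (0:ℝ) < (RD:ℝ) - i + 1 := by linarith
    have h3 : (0:ℝ) < (RD:ℝ) - j := by linarith
    have hi0 : i ≠ 0 := by omega
    simp only [astar, dstar, if_pos hjA, if_neg hi0, if_pos hi]
    have ha : ((RD:ℝ) - RA) / (((RD:ℝ) - i + 1) * ((RD:ℝ) - i)) ≤ 1 / ((RD:ℝ) - i) := by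
      rw [div_le_div_iff₀ (by positivity) h1]
      nlinarith
    have hd : 1 / ((RD:ℝ) - j) ≤ 1 := by
      rw [div_le_one h3]; linarith
    calc ((RD:ℝ) - RA) / (((RD:ℝ) - i + 1) * ((RD:ℝ) - i)) * (1 / ((RD:ℝ) - j))
        ≤ (1 / ((RD:ℝ) - i)) * 1 := by
          apply mul_le_mul ha hd (by positivity) (by positivity)
      _ = 1 / ((RD:ℝ) - i) := by ring


/-- As Defender's endowment `R_D → ∞` with Attacker's endowment `R_A` fixed:
Defender defends at `R_A` with probability tending to `1`, Attacker refrains from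
attack with probability tending to `1`, and Attacker's win probability tends to `0`.
Here `l* = min (R_A, k*(R_D))`. -/
theorem rich_defender_limits (RA : ℕ) (hRA : 2 ≤ RA) (K : ℕ → ℕ)
    (hK : ∀ RD, 2 ≤ RD → IsUpperBound RD (K RD)) :
    Filter.Tendsto (fun RD : ℕ => dstar RD (min RA (K RD)) RA) Filter.atTop (nhds 1) ∧
    Filter.Tendsto (fun RD : ℕ => astar RD (min RA (K RD)) 0) Filter.atTop (nhds 1) ∧
    Filter.Tendsto (fun RD : ℕ =>
        PW RA RD (astar RD (min RA (K RD))) (dstar RD (min RA (K RD))))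
      Filter.atTop (nhds 0) := by
  have hmin : ∀ᶠ RD in atTop, min RA (K RD) = RA := by
    filter_upwards [eventually_ge_atTop (2*RA)] with RD hRD
    have h2 : 2 ≤ RD := by omega
    obtain ⟨h1, hle, _, hgt⟩ := hK RD h2
    have := K_ge RD (K RD) h1 hle hgt
    omega
  refine ⟨?_, ?_, ?_⟩
  · -- dstar limit
    have hbase : Tendsto (fun RD : ℕ => 1 - ∑ k ∈ Finset.range RA, 1 / ((RD:ℝ) - k))
        atTop (nhds 1) := by
      have hsum : Tendsto (fun RD : ℕ => ∑ k ∈ Finset.range RA, 1 / ((RD:ℝ) - k))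
          atTop (nhds 0) := by
        have := tendsto_finset_sum (Finset.range RA)
          (fun k _ => tendsto_inv_sub (k : ℝ))
        simpa using this
      simpa using tendsto_const_nhds.sub hsum
    apply hbase.congr'
    filter_upwards [hmin] with RD h
    rw [h]
    simp [dstar]
  · -- astar limit
    have hbase : Tendsto (fun RD : ℕ => 1 - (RA:ℝ) / RD) atTop (nhds 1) := by
      simpa using tendsto_const_nhds.sub (tendsto_const_div_atTop_nhds_zero_nat (RA:ℝ))
    apply hbase.congr'
    filter_upwards [hmin, eventually_ge_atTop 1] with RD h h1
    rw [show astar RD (min RA (K RD)) 0 = ((RD:ℝ) - RA)/RD by rw [h]; simp [astar]]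
    have hRD : (RD:ℝ) ≠ 0 := Nat.cast_ne_zero.mpr (by omega)
    rw [sub_div, div_self hRD]
  · -- PW limit
    have hbase : Tendsto (fun RD : ℕ =>
        ∑ i ∈ Finset.range (RA + 1), ∑ j ∈ Finset.range i, astar RD RA i * dstar RD RA j)
        atTop (nhds 0) := by
      have := tendsto_finset_sum (Finset.range (RA+1)) (fun i hi =>
        tendsto_finset_sum (Finset.range i) (fun j hj =>
          term_tendsto RA i j (by simp at hi; omega) (by simpa using hj)))
      simpa using this
    apply hbase.congr'
    filter_upwards [hmin, eventually_ge_atTop RA] with RD h hge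
    rw [PW]
    apply Finset.sum_congr rfl
    intro i hi
    simp only [Finset.mem_range] at hi
    rw [h]
    rw [← Finset.sum_filter]
    congr 1
    ext j
    simp only [Finset.mem_filter, Finset.mem_range]
    omega
end
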